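/- Let f : (0,1) → [0,∞) be convex, symmetric in the sense that f(1−x) = f(x) for all x ∈ (0,1), and Lebesgue integrable on (0,1). Then for every integer k ≥ 2: (1 − 1/k)·f(1/2) ≤ (1/k)·Σ_{ℓ=1}^{k−1} f(ℓ/k), and moreover (1/k)·Σ_{ℓ=1}^{k−1} f(ℓ/k) ≤ ∫₀¹ f(u) du − ∫_{1/2}^{1/2+1/k} f(u) du when k is even, and (1/k)·Σ_{ℓ=1}^{k−1} f(ℓ/k) ≤ ∫₀¹ f(u) du − ∫_{(k−1)/(2k)}^{(k+1)/(2k)} f(u) du when k is odd. -/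

import Mathlib

open MeasureTheory Finset

lemma ioo_int {g : ℝ → ℝ} {a b : ℝ} (h : a ≤ b) :
    ∫ u in Set.Ioo a b, g u = ∫ u in a..b, g u := by
  rw [intervalIntegral.integral_of_le h, integral_Ioc_eq_integral_Ioo]

lemma intInt {f : ℝ → ℝ} (hint : IntegrableOn f (Set.Ioo (0:ℝ) 1))
    {a b : ℝ} (h0 : 0 ≤ a) (hab : a ≤ b) (h1 : b ≤ 1) :
    IntervalIntegrable f volume a b :=
  (intervalIntegrable_iff_integrableOn_Ioo_of_le hab).2
    (hint.mono_set (Set.Ioo_subset_Ioo h0 h1))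

lemma iooSplit {f : ℝ → ℝ} (hint : IntegrableOn f (Set.Ioo (0:ℝ) 1))
    {a b c : ℝ} (h0 : 0 ≤ a) (hab : a ≤ b) (hbc : b ≤ c) (h1 : c ≤ 1) :
    ∫ u in Set.Ioo a c, f u =
      (∫ u in Set.Ioo a b, f u) + ∫ u in Set.Ioo b c, f u := by
  rw [ioo_int (hab.trans hbc), ioo_int hab, ioo_int hbc]
  exact (intervalIntegral.integral_add_adjacent_intervals
    (intInt hint h0 hab (by linarith)) (intInt hint (by linarith) hbc h1)).symm

lemma monoR {f : ℝ → ℝ} (hconv : ConvexOn ℝ (Set.Ioo (0:ℝ) 1) f)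
    (hsym : ∀ x ∈ Set.Ioo (0:ℝ) 1, f (1 - x) = f x)
    {x y : ℝ} (hx : 1/2 ≤ x) (hxy : x ≤ y) (hy : y < 1) : f x ≤ f y := by
  have hymem : y ∈ Set.Ioo (0:ℝ) 1 := ⟨by linarith, hy⟩
  have h1y : (1 - y) ∈ Set.Ioo (0:ℝ) 1 := ⟨by linarith, by linarith⟩
  have hxmem : x ∈ Set.Icc (1 - y) y := ⟨by linarith, hxy⟩
  have := hconv.le_max_of_mem_Icc h1y hymem hxmem
  rwa [hsym y hymem, max_self] at this

lemma shiftL {f : ℝ → ℝ} (hconv : ConvexOn ℝ (Set.Ioo (0:ℝ) 1) f)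
    (hsym : ∀ x ∈ Set.Ioo (0:ℝ) 1, f (1 - x) = f x)
    (hint : IntegrableOn f (Set.Ioo (0:ℝ) 1))
    {a b c : ℝ} (ha : 1/2 ≤ a) (hab : a ≤ b) (hc : 0 ≤ c) (hbc : b + c ≤ 1) :
    ∫ u in Set.Ioo a b, f u ≤ ∫ u in Set.Ioo (a + c) (b + c), f u := by
  have hsub1 : Set.Ioo a b ⊆ Set.Ioo (0:ℝ) 1 :=
    Set.Ioo_subset_Ioo (by linarith) (by linarith)
  have hsub2 : Set.Ioo (a + c) (b + c) ⊆ Set.Ioo (0:ℝ) 1 :=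
    Set.Ioo_subset_Ioo (by linarith) (by linarith)
  have hI2 : IntegrableOn f (Set.Ioo (a + c) (b + c)) := hint.mono_set hsub2
  have hII2 : IntervalIntegrable f volume (a + c) (b + c) :=
    (intervalIntegrable_iff_integrableOn_Ioo_of_le (by linarith)).2 hI2
  have hIIc : IntervalIntegrable (fun x => f (x + c)) volume a b := by
    have := hII2.comp_add_right c
    simpa using this
  have hIc : IntegrableOn (fun x => f (x + c)) (Set.Ioo a b) :=
    (intervalIntegrable_iff_integrableOn_Ioo_of_le hab).1 hIIc
  have step1 : ∫ u in Set.Ioo a b, f u ≤ ∫ u in Set.Ioo a b, f (u + c) := by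
    refine setIntegral_mono_on (hint.mono_set hsub1) hIc measurableSet_Ioo ?_
    intro x hx
    exact monoR hconv hsym (by linarith [hx.1]) (by linarith) (by linarith [hx.2])
  have step2 : ∫ u in Set.Ioo a b, f (u + c) = ∫ u in Set.Ioo (a + c) (b + c), f u := by
    rw [ioo_int hab, ioo_int (show a + c ≤ b + c by linarith),
      intervalIntegral.integral_comp_add_right]
  linarith [step1, step2.le, step2.ge]

lemma reflectL {f : ℝ → ℝ}
    (hsym : ∀ x ∈ Set.Ioo (0:ℝ) 1, f (1 - x) = f x)
    {a b : ℝ} (ha : 0 ≤ a) (hab : a ≤ b) (hb : b ≤ 1) :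
    ∫ u in Set.Ioo a b, f u = ∫ u in Set.Ioo (1 - b) (1 - a), f u := by
  rw [ioo_int hab, ioo_int (show 1 - b ≤ 1 - a by linarith),
    ← intervalIntegral.integral_comp_sub_left f 1,
    intervalIntegral.integral_of_le hab, intervalIntegral.integral_of_le hab,
    integral_Ioc_eq_integral_Ioo, integral_Ioc_eq_integral_Ioo]
  refine setIntegral_congr_fun measurableSet_Ioo fun x hx => ?_
  exact (hsym x ⟨lt_of_le_of_lt ha hx.1, lt_of_lt_of_le hx.2 hb⟩).symm

lemma hh {f : ℝ → ℝ} (hconv : ConvexOn ℝ (Set.Ioo (0:ℝ) 1) f)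
    (hint : IntegrableOn f (Set.Ioo (0:ℝ) 1))
    {a b : ℝ} (ha : 0 < a) (hab : a < b) (hb : b < 1) :
    f ((a + b) / 2) * (b - a) ≤ ∫ u in Set.Ioo a b, f u := by
  have hsub : Set.Icc a b ⊆ Set.Ioo (0:ℝ) 1 := fun x hx =>
    ⟨lt_of_lt_of_le ha hx.1, lt_of_le_of_lt hx.2 hb⟩
  have hsub' : Set.Ioo a b ⊆ Set.Ioo (0:ℝ) 1 :=
    Set.Ioo_subset_Icc_self.trans hsub
  have hconv' : ConvexOn ℝ (Set.Icc a b) f := hconv.subset hsub (convex_Icc a b)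
  have hcont : ContinuousOn f (Set.Icc a b) := by
    have h := hconv.continuousOn_interior
    rw [isOpen_Ioo.interior_eq] at h
    exact h.mono hsub
  set μ : Measure ℝ := volume.restrict (Set.Ioo a b) with hμ
  have huniv : μ Set.univ = ENNReal.ofReal (b - a) := by
    simp [hμ, Measure.restrict_apply, Real.volume_Ioo]
  haveI : IsFiniteMeasure μ := ⟨by rw [huniv]; exact ENNReal.ofReal_lt_top⟩
  haveI : NeZero μ := by
    refine ⟨fun h => ?_⟩
    rw [h] at huniv
    simp only [Measure.coe_zero, Pi.zero_apply] at huniv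
    rw [eq_comm, ENNReal.ofReal_eq_zero] at huniv
    linarith
  have hid : Integrable (fun x => x) μ := by
    have : IntegrableOn (fun x : ℝ => x) (Set.Icc a b) :=
      continuous_id.continuousOn.integrableOn_compact isCompact_Icc
    exact this.mono_set Set.Ioo_subset_Icc_self
  have hfi : Integrable (f ∘ (fun x => x)) μ := hint.mono_set hsub'
  have hfs : ∀ᵐ x ∂μ, (fun x : ℝ => x) x ∈ Set.Icc a b :=
    ae_restrict_of_forall_mem measurableSet_Ioo fun x hx => Set.Ioo_subset_Icc_self hx
  have hkey := hconv'.map_average_le hcont isClosed_Icc hfs hid hfi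
  have havg : (⨍ x, x ∂μ) = (a + b) / 2 := by
    rw [average_eq, measureReal_def, huniv, ENNReal.toReal_ofReal (by linarith)]
    have h1 : (∫ x, x ∂μ) = (b ^ 2 - a ^ 2) / 2 := by
      have h2 := ioo_int (g := fun x : ℝ => x) hab.le
      rw [hμ, h2, integral_id]
    rw [h1]
    have hba : b - a ≠ 0 := by linarith
    rw [smul_eq_mul, show b ^ 2 - a ^ 2 = (b - a) * (b + a) by ring, mul_div_assoc,
      inv_mul_cancel_left₀ hba]
    ring
  rw [havg] at hkey
  have havg2 : (⨍ x, f x ∂μ) = (b - a)⁻¹ * ∫ u in Set.Ioo a b, f u := by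
    rw [average_eq, measureReal_def, huniv, ENNReal.toReal_ofReal (by linarith)]
    rfl
  rw [havg2] at hkey
  have hba : (0:ℝ) < b - a := by linarith
  calc f ((a + b) / 2) * (b - a)
      ≤ ((b - a)⁻¹ * ∫ u in Set.Ioo a b, f u) * (b - a) :=
        mul_le_mul_of_nonneg_right hkey hba.le
    _ = ∫ u in Set.Ioo a b, f u := by field_simp

set_option maxHeartbeats 1000000 in
theorem stmt_6 (f : ℝ → ℝ)
    (hconv : ConvexOn ℝ (Set.Ioo (0:ℝ) 1) f)
    (hnonneg : ∀ x ∈ Set.Ioo (0:ℝ) 1, 0 ≤ f x)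
    (hsym : ∀ x ∈ Set.Ioo (0:ℝ) 1, f (1 - x) = f x)
    (hint : IntegrableOn f (Set.Ioo (0:ℝ) 1)) :
    ∀ k : ℕ, 2 ≤ k →
      ((1 - 1/(k:ℝ)) * f (1/2) ≤ (1/(k:ℝ)) * ∑ ℓ ∈ Finset.Ico 1 k, f ((ℓ:ℝ)/(k:ℝ))) ∧
      (Even k →
        (1/(k:ℝ)) * ∑ ℓ ∈ Finset.Ico 1 k, f ((ℓ:ℝ)/(k:ℝ)) ≤
          (∫ u in Set.Ioo (0:ℝ) 1, f u) - ∫ u in Set.Ioo (1/2 : ℝ) (1/2 + 1/(k:ℝ)), f u) ∧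
      (Odd k →
        (1/(k:ℝ)) * ∑ ℓ ∈ Finset.Ico 1 k, f ((ℓ:ℝ)/(k:ℝ)) ≤
          (∫ u in Set.Ioo (0:ℝ) 1, f u) -
            ∫ u in Set.Ioo (((k:ℝ) - 1)/(2*(k:ℝ))) (((k:ℝ) + 1)/(2*(k:ℝ))), f u) := by
  intro k hk
  set K : ℝ := (k : ℝ) with hKdef
  have hK2 : (2:ℝ) ≤ K := by rw [hKdef]; exact_mod_cast hk
  have hK0 : (0:ℝ) < K := by linarith
  set e : ℝ := 1 / (2 * K) with he
  have he0 : 0 < e := by positivity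
  have he14 : e ≤ 1/4 := by
    rw [he]
    rw [div_le_iff₀ (by linarith)]
    linarith
  have hKe : 1 / K = 2 * e := by rw [he]; field_simp
  set S : ℝ := ∑ ℓ ∈ Finset.Ico 1 k, f ((ℓ:ℝ)/K) with hS
  -- Part 1
  have part1 : (1 - 1/K) * f (1/2) ≤ (1/K) * S := by
    have hlow : ∀ ℓ ∈ Finset.Ico 1 k, f (1/2) ≤ f ((ℓ:ℝ)/K) := by
      intro ℓ hℓ
      rw [Finset.mem_Ico] at hℓ
      have h1 : (1:ℝ) ≤ (ℓ:ℝ) := by exact_mod_cast hℓ.1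
      have h2 : (ℓ:ℝ) < K := by rw [hKdef]; exact_mod_cast hℓ.2
      have hx : ((ℓ:ℝ)/K) ∈ Set.Ioo (0:ℝ) 1 :=
        ⟨by positivity, by rw [div_lt_one hK0]; exact h2⟩
      have h1x : (1 - (ℓ:ℝ)/K) ∈ Set.Ioo (0:ℝ) 1 := ⟨by linarith [hx.2], by linarith [hx.1]⟩
      have hcv := hconv.2 hx h1x (by norm_num : (0:ℝ) ≤ 1/2) (by norm_num : (0:ℝ) ≤ 1/2)
        (by norm_num : (1/2 : ℝ) + 1/2 = 1)
      rw [hsym _ hx] at hcv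
      have harg : (1/2 : ℝ) • ((ℓ:ℝ)/K) + (1/2 : ℝ) • (1 - (ℓ:ℝ)/K) = 1/2 := by
        simp only [smul_eq_mul]; ring
      rw [harg] at hcv
      simp only [smul_eq_mul] at hcv
      linarith
    have hcard := Finset.card_nsmul_le_sum (Finset.Ico 1 k) (fun ℓ => f ((ℓ:ℝ)/K))
      (f (1/2)) hlow
    rw [Nat.card_Ico, nsmul_eq_mul] at hcard
    have hcast : ((k - 1 : ℕ) : ℝ) = K - 1 := by
      have h1 : (1:ℕ) ≤ k := by omega
      push_cast [h1]; rw [hKdef]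
    rw [hcast] at hcard
    have h1K : 0 ≤ 1/K := by positivity
    have := mul_le_mul_of_nonneg_left hcard h1K
    calc (1 - 1/K) * f (1/2) = (1/K) * ((K - 1) * f (1/2)) := by field_simp
      _ ≤ (1/K) * S := this
  -- Central bound: (1/K) * S ≤ ∫ over (e, 1-e)
  have central : (1/K) * S ≤ ∫ u in Set.Ioo e (1 - e), f u := by
    set a : ℕ → ℝ := fun i => (2 * (i:ℝ) + 1) / (2 * K) with ha
    have hmono : ∀ i j : ℕ, i ≤ j → a i ≤ a j := by
      intro i j hij
      have hij' : (i:ℝ) ≤ (j:ℝ) := by exact_mod_cast hij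
      simp only [ha]
      rw [div_le_div_iff_of_pos_right (by linarith : (0:ℝ) < 2*K)]
      linarith
    have hbounds : ∀ i : ℕ, i ≤ k - 1 → 0 < a i ∧ a i < 1 := by
      intro i hi
      have hi' : (i:ℝ) ≤ K - 1 := by
        have : (i:ℝ) ≤ ((k-1:ℕ):ℝ) := by exact_mod_cast hi
        have h1 : (1:ℕ) ≤ k := by omega
        push_cast [h1] at this
        linarith
      constructor
      · simp only [ha]; positivity
      · simp only [ha]
        rw [div_lt_one (by linarith)]
        linarith
    have hII : ∀ i : ℕ, i < k - 1 → IntervalIntegrable f volume (a i) (a (i+1)) := by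
      intro i hi
      exact intInt hint (hbounds i (by omega)).1.le (hmono i (i+1) (by omega))
        (hbounds (i+1) (by omega)).2.le
    have hadj := intervalIntegral.sum_integral_adjacent_intervals (μ := volume)
      (a := a) (n := k - 1) hII
    have ha0 : a 0 = e := by rw [ha, he]; norm_num
    have hak : a (k - 1) = 1 - e := by
      have h1 : (1:ℕ) ≤ k := by omega
      have hc : ((k - 1 : ℕ) : ℝ) = K - 1 := by push_cast [h1]; rw [hKdef]
      simp only [ha]
      rw [hc, he]
      field_simp
      ring
    have hterm : ∀ i ∈ Finset.range (k - 1),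
        (1/K) * f (((i:ℝ) + 1)/K) ≤ ∫ x in a i..a (i+1), f x := by
      intro i hi
      rw [Finset.mem_range] at hi
      have hb1 := hbounds i (by omega)
      have hb2 := hbounds (i+1) (by omega)
      have hlt : a i < a (i+1) := by
        simp only [ha]
        rw [div_lt_div_iff_of_pos_right (by linarith : (0:ℝ) < 2*K)]
        push_cast
        linarith
      have hhh := hh hconv hint hb1.1 hlt hb2.2
      have hKne : K ≠ 0 := ne_of_gt hK0
      have h2K : (2*K) ≠ 0 := by positivity
      have hmid : (a i + a (i+1)) / 2 = ((i:ℝ) + 1)/K := by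
        simp only [ha]
        push_cast
        rw [← add_div, div_div,
          div_eq_div_iff (by positivity : (2*K)*2 ≠ 0) hKne]
        ring
      have hlen : a (i+1) - a i = 1/K := by
        simp only [ha]
        push_cast
        rw [div_sub_div_same, div_eq_div_iff h2K hKne]
        ring
      rw [hmid, hlen] at hhh
      rw [← ioo_int hlt.le]
      linarith [hhh]
    have hsumS : (1/K) * S = ∑ i ∈ Finset.range (k - 1), (1/K) * f (((i:ℝ) + 1)/K) := by
      rw [hS, Finset.mul_sum, Finset.sum_Ico_eq_sum_range]
      apply Finset.sum_congr rfl
      intro i _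
      congr 1
      push_cast
      ring
    rw [hsumS]
    calc ∑ i ∈ Finset.range (k - 1), (1/K) * f (((i:ℝ) + 1)/K)
        ≤ ∑ i ∈ Finset.range (k - 1), ∫ x in a i..a (i+1), f x :=
          Finset.sum_le_sum hterm
      _ = ∫ x in (a 0)..(a (k-1)), f x := hadj
      _ = ∫ u in Set.Ioo e (1 - e), f u := by
          rw [ha0, hak, ioo_int (by linarith : e ≤ 1 - e)]
  -- Edge pieces
  set E : ℝ := ∫ u in Set.Ioo (1 - e) 1, f u with hE
  have hEdge : ∫ u in Set.Ioo 0 e, f u = E := by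
    have := reflectL hsym (le_refl (0:ℝ)) he0.le (by linarith)
    rw [sub_zero] at this
    rw [this, hE]
  have piece1 : ∫ u in Set.Ioo (1/2 : ℝ) (1/2 + e), f u ≤ E := by
    have h := shiftL hconv hsym hint (a := 1/2) (b := 1/2 + e) (c := 1/2 - e)
      (le_refl _) (by linarith) (by linarith) (by linarith)
    rw [show (1/2 + (1/2 - e) : ℝ) = 1 - e by ring,
      show ((1/2 + e) + (1/2 - e) : ℝ) = 1 by ring] at h
    exact h
  have piece2 : ∫ u in Set.Ioo (1/2 + e : ℝ) (1/2 + 2*e), f u ≤ E := by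
    have h := shiftL hconv hsym hint (a := 1/2 + e) (b := 1/2 + 2*e) (c := 1/2 - 2*e)
      (by linarith) (by linarith) (by linarith) (by linarith)
    rw [show ((1/2 + e) + (1/2 - 2*e) : ℝ) = 1 - e by ring,
      show ((1/2 + 2*e) + (1/2 - 2*e) : ℝ) = 1 by ring] at h
    exact h
  have piece0 : ∫ u in Set.Ioo (1/2 - e : ℝ) (1/2 : ℝ), f u
      = ∫ u in Set.Ioo (1/2 : ℝ) (1/2 + e), f u := by
    have h := reflectL hsym (a := 1/2 - e) (b := 1/2) (by linarith) (by linarith) (by norm_num)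
    rw [show (1 - (1/2 : ℝ)) = 1/2 by ring, show (1 - (1/2 - e) : ℝ) = 1/2 + e by ring] at h
    exact h
  have hSplit : ∫ u in Set.Ioo (0:ℝ) 1, f u =
      (∫ u in Set.Ioo (0:ℝ) e, f u) + (∫ u in Set.Ioo e (1 - e), f u) + E := by
    rw [iooSplit hint (le_refl 0) (by linarith : (0:ℝ) ≤ 1 - e) (by linarith : (1:ℝ) - e ≤ 1) (le_refl 1),
      iooSplit hint (le_refl 0) he0.le (by linarith : e ≤ 1 - e) (by linarith)]
  refine ⟨part1, fun _ => ?_, fun _ => ?_⟩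
  · -- even case
    rw [show (1/2 + 1/K : ℝ) = 1/2 + 2*e by rw [hKe]]
    have hJ : ∫ u in Set.Ioo (1/2 : ℝ) (1/2 + 2*e), f u =
        (∫ u in Set.Ioo (1/2 : ℝ) (1/2 + e), f u) +
          ∫ u in Set.Ioo (1/2 + e : ℝ) (1/2 + 2*e), f u :=
      iooSplit hint (by norm_num) (by linarith) (by linarith) (by linarith)
    rw [hSplit, hJ]
    linarith [central, piece1, piece2, hEdge]
  · -- odd case
    have hep1 : ((K - 1)/(2*K) : ℝ) = 1/2 - e := by rw [he]; field_simp
    have hep2 : ((K + 1)/(2*K) : ℝ) = 1/2 + e := by rw [he]; field_simp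
    rw [hep1, hep2]
    have hJ : ∫ u in Set.Ioo (1/2 - e : ℝ) (1/2 + e), f u =
        (∫ u in Set.Ioo (1/2 - e : ℝ) (1/2 : ℝ), f u) +
          ∫ u in Set.Ioo (1/2 : ℝ) (1/2 + e), f u :=
      iooSplit hint (by linarith) (by linarith) (by linarith) (by linarith)
    rw [hSplit, hJ, piece0]
    linarith [central, piece1, hEdge]
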